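/- Let w_1, …, w_T be i.i.d. random vectors in ℝ^d, each distributed as a centered Gaussian with covariance σ²I, and suppose T > 2. Then E[max_{1 ≤ t ≤ T} ‖w_t‖²] ≤ 5σ²d log(3T), where ‖·‖ is the Euclidean norm. -/

import Mathlib

open MeasureTheory ProbabilityTheory
open scoped NNReal ENNReal

lemma my_pi_map_eval {ι : Type*} [Fintype ι] {α : Type*} [MeasurableSpace α]
    (μ : Measure α) [IsProbabilityMeasure μ] (t : ι) :
    (Measure.pi fun _ : ι => μ).map (Function.eval t) = μ := by
  classical
  refine Measure.ext fun s hs => ?_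
  rw [Measure.map_apply (measurable_pi_apply t) hs, Set.eval_preimage, Measure.pi_pi,
    Fintype.prod_eq_single t (fun j hj => by simp [Function.update_of_ne hj])]
  simp

lemma my_integral_pi_pow {ι : Type*} [Fintype ι] {α : Type*} [MeasurableSpace α]
    (μ : Measure α) [SigmaFinite μ] (f : α → ℝ) :
    ∫ x : ι → α, ∏ i, f (x i) ∂(Measure.pi fun _ : ι => μ)
      = (∫ x, f x ∂μ) ^ (Fintype.card ι) := by
  letI : MeasureSpace α := ⟨μ⟩
  exact integral_fintype_prod_eq_pow (ι := ι) f

lemma my_integrable_pi_prod {ι : Type*} [Fintype ι] {α : Type*} [MeasurableSpace α]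
    (μ : Measure α) [SigmaFinite μ] {f : α → ℝ} (hf : Integrable f μ) :
    Integrable (fun x : ι → α => ∏ i, f (x i)) (Measure.pi fun _ : ι => μ) := by
  letI : MeasureSpace α := ⟨μ⟩
  exact Integrable.fintype_prod fun _ => hf

lemma my_gauss_scalar (σ : ℝ) (hσ : 0 < σ) :
    Integrable (fun x => Real.exp ((3 * σ ^ 2)⁻¹ * x ^ 2))
        (gaussianReal 0 ⟨σ ^ 2, sq_nonneg σ⟩) ∧
    ∫ x, Real.exp ((3 * σ ^ 2)⁻¹ * x ^ 2) ∂(gaussianReal 0 ⟨σ ^ 2, sq_nonneg σ⟩)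
      = Real.sqrt 3 := by
  have hσ2 : (0:ℝ) < σ ^ 2 := by positivity
  set v : ℝ≥0 := ⟨σ ^ 2, sq_nonneg σ⟩ with hv_def
  have hv : v ≠ 0 := by
    intro h
    have : (v : ℝ) = 0 := by rw [h]; simp
    rw [hv_def] at this
    change σ ^ 2 = 0 at this
    linarith
  have hvr : (v : ℝ) = σ ^ 2 := rfl
  set b : ℝ := (6 * σ ^ 2)⁻¹ with hb_def
  have hb : 0 < b := by positivity
  have hgr : gaussianReal 0 v
      = (volume : Measure ℝ).withDensity fun x => ((gaussianPDFReal 0 v x).toNNReal : ℝ≥0∞) := by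
    rw [gaussianReal_of_var_ne_zero 0 hv]
    rfl
  have hmeas : Measurable fun x => (gaussianPDFReal 0 v x).toNNReal :=
    (measurable_gaussianPDFReal 0 v).real_toNNReal
  have hpoint : (fun x => (gaussianPDFReal 0 v x).toNNReal • Real.exp ((3 * σ ^ 2)⁻¹ * x ^ 2))
      = fun x => (Real.sqrt (2 * Real.pi * σ ^ 2))⁻¹ * Real.exp (-b * x ^ 2) := by
    funext x
    rw [NNReal.smul_def, Real.coe_toNNReal _ (gaussianPDFReal_nonneg _ _ _)]
    rw [gaussianPDFReal, hvr]
    simp only [smul_eq_mul, mul_assoc]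
    congr 1
    rw [← Real.exp_add]
    congr 1
    rw [hb_def]
    field_simp
    ring
  constructor
  · rw [hgr, integrable_withDensity_iff_integrable_smul hmeas, hpoint]
    exact (integrable_exp_neg_mul_sq hb).const_mul _
  · rw [hgr, integral_withDensity_eq_integral_smul hmeas, hpoint,
      integral_const_mul, integral_gaussian b]
    have h1 : Real.pi / b = 3 * (2 * Real.pi * σ ^ 2) := by
      rw [hb_def]
      field_simp
      ring
    have h2 : Real.sqrt (2 * Real.pi * σ ^ 2) ≠ 0 := by
      have := Real.pi_pos
      positivity
    rw [h1, Real.sqrt_mul (by norm_num : (0:ℝ) ≤ 3)]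
    field_simp

set_option maxHeartbeats 2000000 in
/-- **Lemma (expected maximal squared norm of Gaussian vectors).**
Let `w_1, …, w_T` be i.i.d. random vectors in `ℝ^d`, each a centered Gaussian with
covariance `σ²I`, and suppose `T > 2`.  Then
`E[max_{1 ≤ t ≤ T} ‖w_t‖²] ≤ 5σ²d·log(3T)` (Euclidean norm). -/
theorem expected_max_gaussian_sq_norm (σ : ℝ) (hσ : 0 < σ) (d T : ℕ) (hd : 0 < d)
    (hT : 2 < T) :
    ∫ w : Fin T → Fin d → ℝ, (⨆ t : Fin T, ∑ i, w t i ^ 2)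
        ∂(Measure.pi fun _ : Fin T =>
            (Measure.pi fun _ : Fin d => gaussianReal 0 ⟨σ ^ 2, sq_nonneg σ⟩))
      ≤ 5 * σ ^ 2 * d * Real.log (3 * T) := by
  have hσ2 : (0:ℝ) < σ ^ 2 := by positivity
  haveI : Nonempty (Fin T) := ⟨⟨0, by omega⟩⟩
  set c : ℝ := (3 * σ ^ 2)⁻¹ with hc_def
  have hc : 0 < c := by positivity
  set ν : Measure ℝ := gaussianReal 0 ⟨σ ^ 2, sq_nonneg σ⟩ with hν
  set νd : Measure (Fin d → ℝ) := Measure.pi fun _ : Fin d => ν with hνd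
  set μ : Measure (Fin T → Fin d → ℝ) := Measure.pi fun _ : Fin T => νd with hμ
  haveI : IsProbabilityMeasure ν := by rw [hν]; exact instIsProbabilityMeasureGaussianReal _ _
  haveI : IsProbabilityMeasure νd := by rw [hνd]; infer_instance
  haveI : IsProbabilityMeasure μ := by rw [hμ]; infer_instance
  obtain ⟨hg_int, hg_val⟩ := my_gauss_scalar σ hσ
  -- the d-dimensional integrand
  have hGfun : (fun x : Fin d → ℝ => Real.exp (c * ∑ i, x i ^ 2))
      = fun x : Fin d → ℝ => ∏ i, Real.exp (c * x i ^ 2) :=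
    funext fun x => by rw [Finset.mul_sum, Real.exp_sum]
  have hG_meas : Measurable (fun x : Fin d → ℝ => Real.exp (c * ∑ i, x i ^ 2)) := by
    fun_prop
  have hG_int : Integrable (fun x : Fin d → ℝ => Real.exp (c * ∑ i, x i ^ 2)) νd := by
    rw [hGfun]; exact my_integrable_pi_prod ν hg_int
  have hG_val : ∫ x, Real.exp (c * ∑ i, x i ^ 2) ∂νd = Real.sqrt 3 ^ d := by
    rw [hGfun, my_integral_pi_pow ν (fun y => Real.exp (c * y ^ 2)), hg_val, Fintype.card_fin]
  -- lift to the big product via coordinate evaluation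
  have hmp : ∀ t : Fin T, MeasurePreserving (Function.eval t) μ νd := fun t =>
    ⟨measurable_pi_apply t, by rw [hμ]; exact my_pi_map_eval νd t⟩
  have hF_int : ∀ t : Fin T,
      Integrable (fun w : Fin T → Fin d → ℝ => Real.exp (c * ∑ i, w t i ^ 2)) μ := fun t =>
    ((hmp t).integrable_comp hG_meas.aestronglyMeasurable).2 hG_int
  have hF_val : ∀ t : Fin T,
      ∫ w : Fin T → Fin d → ℝ, Real.exp (c * ∑ i, w t i ^ 2) ∂μ = Real.sqrt 3 ^ d := by
    intro t
    have h := integral_map (μ := μ) (φ := Function.eval t)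
      (measurable_pi_apply t).aemeasurable
      (f := fun x : Fin d → ℝ => Real.exp (c * ∑ i, x i ^ 2))
      hG_meas.aestronglyMeasurable
    rw [(hmp t).map_eq, hG_val] at h
    exact h.symm
  -- the supremum
  have hX_meas : ∀ t : Fin T,
      Measurable (fun w : Fin T → Fin d → ℝ => ∑ i, w t i ^ 2) := by
    intro t; fun_prop
  have hS_meas : Measurable (fun w : Fin T → Fin d → ℝ => ⨆ t : Fin T, ∑ i, w t i ^ 2) :=
    Measurable.iSup hX_meas
  have hXle : ∀ (w : Fin T → Fin d → ℝ) (t : Fin T),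
      (∑ i, w t i ^ 2) ≤ ⨆ t : Fin T, ∑ i, w t i ^ 2 := fun w t =>
    le_ciSup (f := fun t : Fin T => ∑ i, w t i ^ 2) (Set.Finite.bddAbove (Set.finite_range _)) t
  have hS_nonneg : ∀ w : Fin T → Fin d → ℝ, 0 ≤ ⨆ t : Fin T, ∑ i, w t i ^ 2 := fun w =>
    le_trans (Finset.sum_nonneg fun i _ => sq_nonneg _) (hXle w ⟨0, by omega⟩)
  have hexp_le : ∀ w : Fin T → Fin d → ℝ,
      Real.exp (c * ⨆ t : Fin T, ∑ i, w t i ^ 2)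
        ≤ ∑ t : Fin T, Real.exp (c * ∑ i, w t i ^ 2) := by
    intro w
    obtain ⟨t₀, ht₀⟩ := Finite.exists_max fun t : Fin T => ∑ i, w t i ^ 2
    have hS_eq : (⨆ t : Fin T, ∑ i, w t i ^ 2) = ∑ i, w t₀ i ^ 2 :=
      le_antisymm (ciSup_le ht₀) (hXle w t₀)
    rw [hS_eq]
    exact Finset.single_le_sum (f := fun t : Fin T => Real.exp (c * ∑ i, w t i ^ 2))
      (fun t _ => (Real.exp_pos _).le) (Finset.mem_univ t₀)
  have hsum_int : Integrable
      (fun w : Fin T → Fin d → ℝ => ∑ t : Fin T, Real.exp (c * ∑ i, w t i ^ 2)) μ :=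
    integrable_finset_sum _ fun t _ => hF_int t
  have hexpS_meas : Measurable
      (fun w : Fin T → Fin d → ℝ => Real.exp (c * ⨆ t : Fin T, ∑ i, w t i ^ 2)) :=
    (hS_meas.const_mul c).exp
  have hexpS_int : Integrable
      (fun w : Fin T → Fin d → ℝ => Real.exp (c * ⨆ t : Fin T, ∑ i, w t i ^ 2)) μ :=
    hsum_int.mono' hexpS_meas.aestronglyMeasurable (ae_of_all _ fun w => by
      rw [Real.norm_eq_abs, abs_of_pos (Real.exp_pos _)]; exact hexp_le w)
  set M : ℝ := T * Real.sqrt 3 ^ d with hM_def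
  have hT_pos : (0:ℝ) < T := by exact_mod_cast (show 0 < T by omega)
  have hsqrt3 : (0:ℝ) < Real.sqrt 3 := Real.sqrt_pos.mpr (by norm_num)
  have hM_pos : 0 < M := mul_pos hT_pos (pow_pos hsqrt3 d)
  have hint_le : ∫ w, Real.exp (c * ⨆ t : Fin T, ∑ i, w t i ^ 2) ∂μ ≤ M := by
    calc ∫ w, Real.exp (c * ⨆ t : Fin T, ∑ i, w t i ^ 2) ∂μ
        ≤ ∫ w, ∑ t : Fin T, Real.exp (c * ∑ i, w t i ^ 2) ∂μ :=
          integral_mono hexpS_int hsum_int hexp_le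
      _ = ∑ t : Fin T, ∫ w, Real.exp (c * ∑ i, w t i ^ 2) ∂μ :=
          integral_finset_sum _ fun t _ => hF_int t
      _ = M := by
          simp only [hF_val, Finset.sum_const, Finset.card_univ, Fintype.card_fin,
            nsmul_eq_mul, hM_def]
  have hpoint : ∀ w : Fin T → Fin d → ℝ,
      (⨆ t : Fin T, ∑ i, w t i ^ 2)
        ≤ (Real.log M + Real.exp (c * ⨆ t : Fin T, ∑ i, w t i ^ 2) / M - 1) / c := by
    intro w
    have h := Real.log_le_sub_one_of_pos
      (div_pos (Real.exp_pos (c * ⨆ t : Fin T, ∑ i, w t i ^ 2)) hM_pos)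
    rw [Real.log_div (Real.exp_ne_zero _) hM_pos.ne', Real.log_exp] at h
    rw [le_div_iff₀ hc]
    linarith
  have hB_int : Integrable (fun w : Fin T → Fin d → ℝ =>
      (Real.log M + Real.exp (c * ⨆ t : Fin T, ∑ i, w t i ^ 2) / M - 1) / c) μ :=
    ((((integrable_const (Real.log M)).add (hexpS_int.div_const M)).sub (integrable_const 1)).div_const c)
  have hS_int : Integrable (fun w : Fin T → Fin d → ℝ => ⨆ t : Fin T, ∑ i, w t i ^ 2) μ :=
    hB_int.mono' hS_meas.aestronglyMeasurable (ae_of_all _ fun w => by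
      rw [Real.norm_eq_abs, abs_of_nonneg (hS_nonneg w)]; exact hpoint w)
  have hfinal : ∫ w, (⨆ t : Fin T, ∑ i, w t i ^ 2) ∂μ ≤ Real.log M / c := by
    calc ∫ w, (⨆ t : Fin T, ∑ i, w t i ^ 2) ∂μ
        ≤ ∫ w, (Real.log M + Real.exp (c * ⨆ t : Fin T, ∑ i, w t i ^ 2) / M - 1) / c ∂μ :=
          integral_mono hS_int hB_int hpoint
      _ = (Real.log M + (∫ w, Real.exp (c * ⨆ t : Fin T, ∑ i, w t i ^ 2) ∂μ) / M - 1) / c := by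
          rw [integral_div]
          rw [show (fun w : Fin T → Fin d → ℝ =>
              Real.log M + Real.exp (c * ⨆ t : Fin T, ∑ i, w t i ^ 2) / M - 1)
              = fun w : Fin T → Fin d → ℝ =>
              (Real.log M - 1) + Real.exp (c * ⨆ t : Fin T, ∑ i, w t i ^ 2) / M from
            funext fun w => by ring]
          rw [integral_add (integrable_const _) (hexpS_int.div_const M), integral_const,
            integral_div, probReal_univ]
          simp only [ENNReal.toReal_one, smul_eq_mul, one_mul]
          ring
      _ ≤ (Real.log M + 1 - 1) / c := by
          gcongr
          exact (div_le_one hM_pos).mpr hint_le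
      _ = Real.log M / c := by ring
  have hT1 : (1:ℝ) ≤ T := by exact_mod_cast (show 1 ≤ T by omega)
  have hlog3 : Real.log 3 ≤ Real.log (3 * T) :=
    Real.log_le_log (by norm_num) (by linarith)
  have hlogT : Real.log T ≤ Real.log (3 * T) :=
    Real.log_le_log hT_pos (by linarith)
  have hL0 : (0:ℝ) ≤ Real.log (3 * T) := Real.log_nonneg (by linarith)
  have hd1 : (1:ℝ) ≤ d := by exact_mod_cast hd
  have hlogM : Real.log M = Real.log T + d * (Real.log 3 / 2) := by
    rw [hM_def, Real.log_mul hT_pos.ne' (pow_ne_zero _ hsqrt3.ne'), Real.log_pow,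
      Real.log_sqrt (by norm_num)]
  have hMc : Real.log M / c = 3 * σ ^ 2 * Real.log M := by
    rw [hc_def]
    field_simp
  refine hfinal.trans ?_
  rw [hMc, hlogM]
  nlinarith [mul_nonneg hσ2.le (sub_nonneg.mpr hlogT),
    mul_nonneg (mul_nonneg hσ2.le (by linarith : (0:ℝ) ≤ (d:ℝ))) (sub_nonneg.mpr hlog3),
    mul_nonneg (mul_nonneg hσ2.le (sub_nonneg.mpr hd1)) hL0,
    mul_nonneg (mul_nonneg hσ2.le (by linarith : (0:ℝ) ≤ (d:ℝ))) hL0]
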